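/- Let v = (v_0,...,v_{2k}) ∈ ℝ^{2k+1} be a singular sequence. If v is recursively generated (both positively and negatively recursively generated), then rank v = rank v^{(rev)} where v^{(rev)} = (v_{2k},...,v_0) is the reversed sequence, and the leading recursion coefficient φ_0 is nonzero. -/

import Mathlib

open Matrix MeasureTheory

noncomputable section

/-- The `(k+1) × (k+1)` Hankel matrix `A_v = (v_{i+j})_{i,j=0}^k`. -/
def hankel (k : ℕ) (v : ℕ → ℝ) : Matrix (Fin (k+1)) (Fin (k+1)) ℝ :=
  Matrix.of fun i j => v (i.1 + j.1)

/-- The top-left `r × r` corner `A_v(r-1) = (v_{i+j})_{i,j=0}^{r-1}`. -/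
def hcorner (v : ℕ → ℝ) (r : ℕ) : Matrix (Fin r) (Fin r) ℝ :=
  Matrix.of fun i j => v (i.1 + j.1)

/-- The `(j+1)`-th column of the Hankel matrix `A_v`. -/
def hcol (k : ℕ) (v : ℕ → ℝ) (j : ℕ) : Fin (k+1) → ℝ :=
  fun i => v (i.1 + j)

/-- `r = rank v`: column `v_r` lies in the span of the preceding columns, and `r`
is minimal with this property. -/
def seqRank (k : ℕ) (v : ℕ → ℝ) (r : ℕ) : Prop :=
  hcol k v r ∈ Submodule.span ℝ (hcol k v '' {j | j < r}) ∧
  ∀ i < r, hcol k v i ∉ Submodule.span ℝ (hcol k v '' {j | j < i})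

/-- `φ = A_v(r-1)⁻¹ (v_r,…,v_{2r-1})ᵀ`. -/
def phi (v : ℕ → ℝ) (r : ℕ) : Fin r → ℝ :=
  (hcorner v r)⁻¹.mulVec fun i => v (r + i.1)

/- Auxiliary lemmas -/

lemma range_fin_eq_image (k : ℕ) (v : ℕ → ℝ) (m : ℕ) :
    Set.range (fun i : Fin m => hcol k v i.1) = hcol k v '' {j | j < m} := by
  ext x
  constructor
  · rintro ⟨i, rfl⟩; exact ⟨i.1, i.2, rfl⟩
  · rintro ⟨j, hj, rfl⟩; exact ⟨⟨j, hj⟩, rfl⟩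

/-- Minimality of `seqRank` gives linear independence of the first `m ≤ r` columns. -/
lemma hcol_indep {k r : ℕ} {v : ℕ → ℝ}
    (h : ∀ i < r, hcol k v i ∉ Submodule.span ℝ (hcol k v '' {j | j < i})) :
    ∀ m ≤ r, LinearIndependent ℝ (fun i : Fin m => hcol k v i.1) := by
  intro m hm
  induction m with
  | zero => exact linearIndependent_empty_type
  | succ n ih =>
    have hfun : (fun i : Fin (n+1) => hcol k v i.1) =
        Fin.snoc (fun i : Fin n => hcol k v i.1) (hcol k v n) := by
      funext i
      refine Fin.lastCases ?_ (fun i => ?_) i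
      · simp [Fin.snoc]
      · simp [Fin.snoc_castSucc]
    rw [hfun, linearIndependent_fin_snoc]
    refine ⟨ih (by omega), ?_⟩
    rw [range_fin_eq_image]
    exact h n (by omega)

/-- The recursion relation on columns. -/
lemma hcol_eq_sum {k r : ℕ} {v : ℕ → ℝ}
    (hprg : ∀ j, r ≤ j → j ≤ 2*k → v j = ∑ i : Fin r, phi v r i * v (j - r + i.1))
    {j : ℕ} (hjr : r ≤ j) (hjk : j ≤ k) :
    hcol k v j = ∑ i : Fin r, phi v r i • hcol k v (j - r + i.1) := by
  funext m
  have hm : m.1 ≤ k := Fin.is_le m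
  have := hprg (m.1 + j) (by omega) (by omega)
  simp only [hcol, Finset.sum_apply, Pi.smul_apply, smul_eq_mul]
  rw [this]
  refine Finset.sum_congr rfl (fun i _ => ?_)
  have hi : i.1 < r := i.2
  rw [show ↑m + (j - r + ↑i) = ↑m + j - r + ↑i from by omega]

/-- Every column lies in the span of the first `r` columns. -/
lemma hcol_mem_span {k r : ℕ} {v : ℕ → ℝ} (hr : r ≤ k)
    (hprg : ∀ j, r ≤ j → j ≤ 2*k → v j = ∑ i : Fin r, phi v r i * v (j - r + i.1)) :
    ∀ j, j ≤ k → hcol k v j ∈ Submodule.span ℝ (hcol k v '' {j | j < r}) := by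
  intro j
  induction j using Nat.strong_induction_on with
  | _ j ih =>
    intro hjk
    rcases lt_or_ge j r with hjr | hjr
    · exact Submodule.subset_span ⟨j, hjr, rfl⟩
    · rw [hcol_eq_sum hprg hjr hjk]
      refine Submodule.sum_mem _ (fun i _ => Submodule.smul_mem _ _ ?_)
      have hi := i.2
      exact ih (j - r + i.1) (by omega) (by omega)

/-- Under `seqRank` and the recursion, the matrix rank equals `r`. -/
lemma rank_eq_seqRank {k r : ℕ} {v : ℕ → ℝ} (hr : r ≤ k) (hrank : seqRank k v r)
    (hprg : ∀ j, r ≤ j → j ≤ 2*k → v j = ∑ i : Fin r, phi v r i * v (j - r + i.1)) :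
    (hankel k v).rank = r := by
  have hcols : (hankel k v)ᵀ = fun j : Fin (k+1) => hcol k v j.1 := rfl
  have hspan : Submodule.span ℝ (Set.range (hankel k v)ᵀ)
      = Submodule.span ℝ (hcol k v '' {j | j < r}) := by
    apply le_antisymm
    · rw [Submodule.span_le]
      rintro x ⟨j, rfl⟩
      rw [hcols]
      exact hcol_mem_span hr hprg j.1 (Fin.is_le j)
    · rw [Submodule.span_le]
      rintro x ⟨j, hj, rfl⟩
      simp only [Set.mem_setOf_eq] at hj
      apply Submodule.subset_span
      exact ⟨⟨j, by omega⟩, rfl⟩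
  rw [Matrix.rank_eq_finrank_span_cols, show (hankel k v).col = (hankel k v)ᵀ from rfl, hspan, ← range_fin_eq_image,
    finrank_span_eq_card (hcol_indep hrank.2 r le_rfl), Fintype.card_fin]

lemma hankel_rev {k : ℕ} (v : ℕ → ℝ) :
    hankel k (fun j => v (2*k - j)) = (hankel k v).submatrix Fin.revPerm Fin.revPerm := by
  ext i j
  have hi : i.1 ≤ k := by omega
  have hj : j.1 ≤ k := by omega
  simp only [hankel, Matrix.of_apply, Matrix.submatrix_apply, Fin.revPerm_apply, Fin.val_rev]
  congr 1
  omega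

theorem stmt6 (k r rrev : ℕ) (v : ℕ → ℝ) (hsing : (hankel k v).det = 0)
    (hr0 : 0 < r) (hr : r ≤ k) (hrank : seqRank k v r)
    (hpd : (hcorner v r).PosDef)
    (hprg : ∀ j, r ≤ j → j ≤ 2*k → v j = ∑ i : Fin r, phi v r i * v (j - r + i.1))
    (hrrev : rrev ≤ k) (hrankrev : seqRank k (fun j => v (2*k - j)) rrev)
    (hpdrev : (hcorner (fun j => v (2*k - j)) rrev).PosDef)
    (hnrg : ∀ j, rrev ≤ j → j ≤ 2*k →
      v (2*k - j) = ∑ i : Fin rrev,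
        phi (fun j' => v (2*k - j')) rrev i * v (2*k - (j - rrev + i.1))) :
    r = rrev ∧ phi v r ⟨0, hr0⟩ ≠ 0 := by
  set w : ℕ → ℝ := fun j => v (2*k - j) with hw
  have hnrg' : ∀ j, rrev ≤ j → j ≤ 2*k →
      w j = ∑ i : Fin rrev, phi w rrev i * w (j - rrev + i.1) := hnrg
  have key1 : (hankel k v).rank = r := rank_eq_seqRank hr hrank hprg
  have key2 : (hankel k w).rank = rrev := rank_eq_seqRank hrrev hrankrev hnrg'
  have hrev : (hankel k w).rank = (hankel k v).rank := by
    rw [hankel_rev v, Matrix.rank_submatrix]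
  have hrr : r = rrev := by rw [← key1, ← hrev, key2]
  refine ⟨hrr, ?_⟩
  intro h0
  -- all columns with index in [1, k] lie in the span of columns 1, …, r-1
  set T : Submodule ℝ (Fin (k+1) → ℝ) :=
    Submodule.span ℝ (Set.range (fun i : Fin (r-1) => hcol k v (i.1+1))) with hT
  have hmemT : ∀ j, 1 ≤ j → j ≤ k → hcol k v j ∈ T := by
    intro j
    induction j using Nat.strong_induction_on with
    | _ j ih =>
      intro hj1 hjk
      rcases lt_or_ge j r with hjr | hjr
      · refine Submodule.subset_span ⟨⟨j - 1, by omega⟩, ?_⟩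
        show hcol k v (j - 1 + 1) = hcol k v j
        rw [show j - 1 + 1 = j from by omega]
      · rw [hcol_eq_sum hprg hjr hjk]
        refine Submodule.sum_mem _ (fun i _ => ?_)
        rcases Nat.eq_zero_or_pos i.1 with hi0 | hi0
        · have : i = ⟨0, hr0⟩ := Fin.ext hi0
          rw [this, h0, zero_smul]
          exact Submodule.zero_mem _
        · have hi := i.2
          exact Submodule.smul_mem _ _ (ih (j - r + i.1) (by omega) (by omega) (by omega))
  -- the columns k, k-1, …, k-r+1 are linearly independent
  have hindep_rev : LinearIndependent ℝ (fun i : Fin r => hcol k w i.1) := by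
    have := hcol_indep hrankrev.2 rrev le_rfl
    rw [← hrr] at this
    exact this
  have hcomp : (fun i : Fin r => hcol k w i.1)
      = (fun i : Fin r => (LinearEquiv.funCongrLeft ℝ ℝ (Fin.revPerm (n := k+1)))
          (hcol k v (k - i.1))) := by
    funext i
    funext m
    have hm : m.1 ≤ k := Fin.is_le m
    have hik : i.1 < r := i.2
    simp only [LinearEquiv.funCongrLeft_apply, LinearMap.funLeft_apply, hcol,
      Fin.revPerm_apply, Fin.val_rev, hw]
    congr 1
    omega
  have hindep : LinearIndependent ℝ (fun i : Fin r => hcol k v (k - i.1)) := by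
    have h1 : LinearIndependent ℝ
        (fun i : Fin r => (LinearEquiv.funCongrLeft ℝ ℝ (Fin.revPerm (n := k+1)))
          (hcol k v (k - i.1))) := by rw [← hcomp]; exact hindep_rev
    have h2 := h1.map' (LinearEquiv.funCongrLeft ℝ ℝ (Fin.revPerm (n := k+1))).symm.toLinearMap
      (LinearEquiv.ker _)
    have heq : ((LinearEquiv.funCongrLeft ℝ ℝ (Fin.revPerm (n := k+1))).symm.toLinearMap ∘
        fun i : Fin r => (LinearEquiv.funCongrLeft ℝ ℝ (Fin.revPerm (n := k+1)))
          (hcol k v (k - i.1))) = fun i : Fin r => hcol k v (k - i.1) := by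
      funext i
      funext x
      simp [LinearMap.funLeft_apply, LinearEquiv.funCongrLeft_apply, Fin.rev_rev]
    rwa [heq] at h2
  have hle : Submodule.span ℝ (Set.range (fun i : Fin r => hcol k v (k - i.1))) ≤ T := by
    rw [Submodule.span_le]
    rintro x ⟨i, rfl⟩
    have hi := i.2
    exact hmemT (k - i.1) (by omega) (by omega)
  have h1 : Module.finrank ℝ
      (Submodule.span ℝ (Set.range (fun i : Fin r => hcol k v (k - i.1)))) = r := by
    rw [finrank_span_eq_card hindep, Fintype.card_fin]
  have h2 : Module.finrank ℝ T ≤ r - 1 := by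
    have := finrank_range_le_card (R := ℝ) (fun i : Fin (r-1) => hcol k v (i.1+1))
    simpa [Set.finrank] using this
  have h3 := Submodule.finrank_mono hle
  omega
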